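/- arXiv:2102.12741 — 2 statements merged into one kernel-verified Lean document; each statement's English description precedes it below -/
import Mathlib

section
/- For the operator A = u∂_v − v∂_u acting on the space P_k of homogeneous polynomials of degree k in two real variables (u,v): if k is odd, then A is invertible on P_k. -/
open MvPolynomial

/-- The operator `A = u ∂_v - v ∂_u` on polynomials in two variables. -/
noncomputable def Aop (Q : MvPolynomial (Fin 2) ℝ) : MvPolynomial (Fin 2) ℝ :=
  X 0 * pderiv 1 Q - X 1 * pderiv 0 Q

namespace AopAux

lemma coeff_pderiv (i : Fin 2) (m : Fin 2 →₀ ℕ) (Q : MvPolynomial (Fin 2) ℝ) :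
    coeff m (pderiv i Q) = ((m i : ℝ) + 1) * coeff (m + Finsupp.single i 1) Q := by
  classical
  induction Q using MvPolynomial.induction_on' with
  | monomial s a =>
    rw [pderiv_monomial, coeff_monomial, coeff_monomial]
    by_cases h0 : s i = 0
    · have h1 : s ≠ m + Finsupp.single i 1 := by
        intro h
        apply Nat.succ_ne_zero (m i)
        rw [← h0, h]
        simp
      rw [if_neg h1, h0]
      simp
    · have hle : Finsupp.single i 1 ≤ s := by
        rw [Finsupp.single_le_iff]
        omega
      by_cases h : s = m + Finsupp.single i 1
      · have hm : s - Finsupp.single i 1 = m := by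
          rw [h]; exact add_tsub_cancel_right _ _
        rw [if_pos hm, if_pos h]
        have hsi : s i = m i + 1 := by rw [h]; simp
        rw [hsi]
        push_cast
        ring
      · have hm : s - Finsupp.single i 1 ≠ m := by
          intro he
          apply h
          rw [← he, tsub_add_cancel_of_le hle]
        rw [if_neg hm, if_neg h, mul_zero]
  | add p q hp hq =>
    rw [map_add, coeff_add, hp, hq, coeff_add]
    ring

/-- The exponent vector `u^a v^b`. -/
noncomputable def mu (a b : ℕ) : Fin 2 →₀ ℕ := Finsupp.single 0 a + Finsupp.single 1 b

lemma mu_app0 (a b : ℕ) : mu a b 0 = a := by simp [mu, Finsupp.single_apply]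

lemma mu_app1 (a b : ℕ) : mu a b 1 = b := by simp [mu, Finsupp.single_apply]

lemma eq_mu (d : Fin 2 →₀ ℕ) : d = mu (d 0) (d 1) := by
  ext j; fin_cases j <;> simp [mu, Finsupp.single_apply]

lemma degree_fin2 (d : Fin 2 →₀ ℕ) : d.degree = d 0 + d 1 := by
  rw [show d.degree = ∑ i ∈ d.support, d i from rfl]
  rw [Finset.sum_subset (Finset.subset_univ _)
    (fun x _ hx => Finsupp.notMem_support_iff.mp hx)]
  exact Fin.sum_univ_two _

lemma degree_mu (a b : ℕ) : (mu a b).degree = a + b := by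
  rw [degree_fin2, mu_app0, mu_app1]

lemma mu_add0 (a b : ℕ) : mu a b + Finsupp.single 0 1 = mu (a + 1) b := by
  ext j; fin_cases j <;> simp [mu, Finsupp.single_apply]

lemma mu_add1 (a b : ℕ) : mu a b + Finsupp.single 1 1 = mu a (b + 1) := by
  ext j; fin_cases j <;> simp [mu, Finsupp.single_apply]

lemma coeff_X0_mul (P : MvPolynomial (Fin 2) ℝ) (a b : ℕ) (ha : a ≠ 0) :
    coeff (mu a b) (X 0 * P) = coeff (mu (a - 1) b) P := by
  have h : mu a b = Finsupp.single 0 1 + mu (a - 1) b := by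
    ext j; fin_cases j <;> simp [mu, Finsupp.single_apply] <;> omega
  rw [h, coeff_X_mul]

lemma coeff_X0_mul_zero (P : MvPolynomial (Fin 2) ℝ) (b : ℕ) :
    coeff (mu 0 b) (X 0 * P) = 0 := by
  classical
  rw [coeff_X_mul', if_neg]
  simp [Finsupp.mem_support_iff, mu_app0]

lemma coeff_X1_mul (P : MvPolynomial (Fin 2) ℝ) (a b : ℕ) (hb : b ≠ 0) :
    coeff (mu a b) (X 1 * P) = coeff (mu a (b - 1)) P := by
  have h : mu a b = Finsupp.single 1 1 + mu a (b - 1) := by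
    ext j; fin_cases j <;> simp [mu, Finsupp.single_apply] <;> omega
  rw [h, coeff_X_mul]

lemma coeff_X1_mul_zero (P : MvPolynomial (Fin 2) ℝ) (a : ℕ) :
    coeff (mu a 0) (X 1 * P) = 0 := by
  classical
  rw [coeff_X_mul', if_neg]
  simp [Finsupp.mem_support_iff, mu_app1]

lemma pderiv_homog {k : ℕ} {Q : MvPolynomial (Fin 2) ℝ} (i : Fin 2)
    (h : Q.IsHomogeneous k) : (pderiv i Q).IsHomogeneous (k - 1) := by
  intro d hd
  rw [coeff_pderiv] at hd
  have h2 : coeff (d + Finsupp.single i 1) Q ≠ 0 := by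
    intro h'
    rw [h', mul_zero] at hd
    exact hd rfl
  have h3 := h h2
  rw [← (show (Finsupp.degree : (Fin 2 →₀ ℕ) →+ ℕ) = Finsupp.weight (1 : Fin 2 → ℕ) from
    Finsupp.degree_eq_weight_one)] at h3 ⊢
  rw [degree_fin2] at h3 ⊢
  fin_cases i <;> simp [Finsupp.single_apply] at h3 <;> omega

lemma aop_homog {k : ℕ} (hk : k ≠ 0) {Q : MvPolynomial (Fin 2) ℝ}
    (h : Q.IsHomogeneous k) : (Aop Q).IsHomogeneous k := by
  have h1 : (X (0 : Fin 2) * pderiv 1 Q : MvPolynomial (Fin 2) ℝ).IsHomogeneous (1 + (k - 1)) :=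
    (isHomogeneous_X _ _).mul (pderiv_homog _ h)
  have h2 : (X (1 : Fin 2) * pderiv 0 Q : MvPolynomial (Fin 2) ℝ).IsHomogeneous (1 + (k - 1)) :=
    (isHomogeneous_X _ _).mul (pderiv_homog _ h)
  have hkk : 1 + (k - 1) = k := by omega
  rw [hkk] at h1 h2
  exact h1.sub h2

lemma ker_zero {k : ℕ} (hk : Odd k) {Q : MvPolynomial (Fin 2) ℝ}
    (hQ : Q.IsHomogeneous k) (hA : Aop Q = 0) : Q = 0 := by
  have hk0 : k ≠ 0 := by rcases hk with ⟨m, hm⟩; omega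
  set c : ℕ → ℝ := fun a => coeff (mu a (k - a)) Q with hc
  -- the coefficient of Aop Q at mu a (k-a) vanishes
  have hzero : ∀ m : Fin 2 →₀ ℕ, coeff m (Aop Q) = 0 := by
    intro m; rw [hA, coeff_zero]
  -- boundary a = 0 :  c 1 = 0
  have hc1 : c 1 = 0 := by
    have h := hzero (mu 0 k)
    rw [Aop, coeff_sub, coeff_X0_mul_zero, coeff_X1_mul _ _ _ hk0, coeff_pderiv,
      mu_add0] at h
    rw [mu_app0] at h
    have e1 : (0 : ℕ) + 1 = 1 := rfl
    rw [e1] at h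
    have e2 : k - 1 = k - 1 := rfl
    -- h : 0 - (0+1) * coeff (mu 1 (k-1)) Q = 0
    have : coeff (mu 1 (k - 1)) Q = 0 := by
      push_cast at h
      linarith
    simpa [hc] using this
  -- boundary a = k :  c (k-1) = 0
  have hck : c (k - 1) = 0 := by
    have h := hzero (mu k 0)
    rw [Aop, coeff_sub, coeff_X1_mul_zero, coeff_X0_mul _ _ _ hk0, coeff_pderiv,
      mu_add1] at h
    rw [mu_app1] at h
    have e : (0 : ℕ) + 1 = 1 := rfl
    rw [e] at h
    have : coeff (mu (k - 1) 1) Q = 0 := by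
      push_cast at h
      linarith
    have e2 : k - (k - 1) = 1 := by omega
    simp only [hc, e2]
    exact this
  -- interior recurrence
  have key : ∀ a : ℕ, 1 ≤ a → a ≤ k - 1 →
      ((k - a + 1 : ℕ) : ℝ) * c (a - 1) = ((a + 1 : ℕ) : ℝ) * c (a + 1) := by
    intro a ha1 ha2
    have h := hzero (mu a (k - a))
    have ha0 : a ≠ 0 := by omega
    have hb0 : k - a ≠ 0 := by omega
    rw [Aop, coeff_sub, coeff_X0_mul _ _ _ ha0, coeff_X1_mul _ _ _ hb0,
      coeff_pderiv, coeff_pderiv, mu_add0, mu_add1, mu_app0, mu_app1] at h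
    have e1 : mu (a - 1) (k - a + 1) = mu (a - 1) (k - (a - 1)) := by
      congr 1; omega
    have e2 : mu (a + 1) (k - a - 1) = mu (a + 1) (k - (a + 1)) := by
      rw [Nat.sub_sub]
    rw [e1, e2] at h
    have e3 : ((k - a : ℕ) : ℝ) + 1 = ((k - a + 1 : ℕ) : ℝ) := by push_cast; ring
    have e4 : ((a : ℕ) : ℝ) + 1 = ((a + 1 : ℕ) : ℝ) := by push_cast; ring
    rw [e3, e4] at h
    simp only [hc]
    linarith [h]
  -- odd indices vanish
  have hodd : ∀ n : ℕ, 2 * n + 1 ≤ k → c (2 * n + 1) = 0 := by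
    intro n
    induction n with
    | zero => intro _; simpa using hc1
    | succ n ih =>
      intro h
      have hkey := key (2 * n + 2) (by omega) (by omega)
      have e1 : 2 * n + 2 - 1 = 2 * n + 1 := by omega
      rw [e1] at hkey
      rw [ih (by omega), mul_zero] at hkey
      have hne : ((2 * n + 2 + 1 : ℕ) : ℝ) ≠ 0 := by
        exact Nat.cast_ne_zero.mpr (by omega)
      have : c (2 * n + 2 + 1) = 0 := by
        by_contra hcon
        exact hcon (by
          have := mul_eq_zero.mp hkey.symm
          tauto)
      have e2 : 2 * (n + 1) + 1 = 2 * n + 2 + 1 := by omega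
      rw [e2]
      exact this
  -- indices of the form k - 1 - 2n vanish
  have heven : ∀ n : ℕ, 2 * n + 1 ≤ k → c (k - 1 - 2 * n) = 0 := by
    intro n
    induction n with
    | zero => intro _; simpa using hck
    | succ n ih =>
      intro h
      have hkey := key (k - 2 - 2 * n) (by omega) (by omega)
      have e1 : k - 2 - 2 * n - 1 = k - 1 - 2 * (n + 1) := by omega
      have e2 : k - 2 - 2 * n + 1 = k - 1 - 2 * n := by omega
      have e3 : k - (k - 2 - 2 * n) + 1 = 2 * n + 3 := by omega
      rw [e1, e2, e3] at hkey
      rw [ih (by omega), mul_zero] at hkey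
      have hne : ((2 * n + 3 : ℕ) : ℝ) ≠ 0 := by
        exact Nat.cast_ne_zero.mpr (by omega)
      by_contra hcon
      exact hcon (by
        have := mul_eq_zero.mp hkey
        tauto)
  -- all coefficients vanish
  have hall : ∀ a : ℕ, a ≤ k → c a = 0 := by
    intro a ha
    rcases Nat.even_or_odd a with he | ho
    · obtain ⟨m, hm⟩ := hk
      obtain ⟨t, ht⟩ := he
      have h1 : 2 * (m - t) + 1 ≤ k := by omega
      have h2 : k - 1 - 2 * (m - t) = a := by omega
      have := heven (m - t) h1
      rwa [h2] at this
    · obtain ⟨t, ht⟩ := ho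
      have := hodd t (by omega)
      rwa [← ht] at this
  -- conclude
  ext d
  rw [coeff_zero]
  by_cases hdeg : d.degree = k
  · have hd0 : d 0 ≤ k := by rw [degree_fin2] at hdeg; omega
    have hd1 : d 1 = k - d 0 := by rw [degree_fin2] at hdeg; omega
    have := hall (d 0) hd0
    rw [hc] at this
    rw [eq_mu d, hd1]
    exact this
  · exact hQ.coeff_eq_zero hdeg

lemma aop_add (p q : MvPolynomial (Fin 2) ℝ) : Aop (p + q) = Aop p + Aop q := by
  simp only [Aop, map_add]
  ring

lemma aop_smul (r : ℝ) (p : MvPolynomial (Fin 2) ℝ) : Aop (r • p) = r • Aop p := by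
  simp only [Aop, Derivation.map_smul, smul_sub, mul_smul_comm]

end AopAux

open AopAux in
/-- If `k` is odd, then `A = u ∂_v - v ∂_u` is invertible on the space `P_k` of
homogeneous polynomials of degree `k`. -/
theorem Aop_bijective_on_homogeneous_of_odd (k : ℕ) (hk : Odd k) :
    (∀ Q : MvPolynomial (Fin 2) ℝ, Q.IsHomogeneous k → (Aop Q).IsHomogeneous k) ∧
    (∀ R : MvPolynomial (Fin 2) ℝ, R.IsHomogeneous k →
      ∃! Q : MvPolynomial (Fin 2) ℝ, Q.IsHomogeneous k ∧ Aop Q = R) := by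
  have hk0 : k ≠ 0 := by rcases hk with ⟨m, hm⟩; omega
  refine ⟨fun Q hQ => aop_homog hk0 hQ, fun R hR => ?_⟩
  set S := homogeneousSubmodule (Fin 2) ℝ k with hS
  have hle : S ≤ restrictTotalDegree (Fin 2) ℝ k := by
    intro p hp
    rw [mem_restrictTotalDegree]
    exact (mem_homogeneousSubmodule _ _ |>.mp hp).totalDegree_le
  haveI : FiniteDimensional ℝ S := Submodule.finiteDimensional_of_le hle
  let L : S →ₗ[ℝ] S :=
    { toFun := fun q => ⟨Aop q.1, aop_homog hk0 q.2⟩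
      map_add' := fun p q => Subtype.ext (aop_add p.1 q.1)
      map_smul' := fun r p => Subtype.ext (aop_smul r p.1) }
  have hinj : Function.Injective L := by
    rw [← LinearMap.ker_eq_bot, LinearMap.ker_eq_bot']
    intro q hq
    have h1 : Aop q.1 = 0 := congrArg Subtype.val hq
    exact Subtype.ext (ker_zero hk q.2 h1)
  have hsurj : Function.Surjective L := LinearMap.injective_iff_surjective.mp hinj
  obtain ⟨q, hq⟩ := hsurj ⟨R, hR⟩
  have hqv : Aop q.1 = R := congrArg Subtype.val hq
  refine ⟨q.1, ⟨q.2, hqv⟩, ?_⟩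
  intro y ⟨hy1, hy2⟩
  have h1 : Aop (y - q.1) = 0 := by
    have hsub : y - q.1 = y + (-1 : ℝ) • q.1 := by
      rw [neg_one_smul]; ring
    rw [hsub, aop_add, aop_smul, hy2, hqv, neg_one_smul]
    ring
  have h2 : (y - q.1).IsHomogeneous k := hy1.sub q.2
  have := ker_zero hk h2 h1
  have : y = q.1 := by
    have h3 : y - q.1 = 0 := this
    linear_combination h3
  exact this
end

section
/- Let J : [0,∞) → (0,∞) be differentiable with |J'(t)| ≤ C J(t)^{2N+1} whenever J(t) ≤ 1, for constants C > 0 and integer N ≥ 1. Set C_N = (2^{2N} − 1)/(2^{2N+1} N C). If J(0) ≤ 1/2 and 0 ≤ t ≤ C_N / J(0)^{2N}, then J(t) ≤ 2 J(0) and |J(t) − J(0)| ≤ 2^{2N+1} C J(0)^{2N+1} t. -/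
open Set Filter Topology

/-- If `|J'| ≤ C J^{2N+1}` whenever `J ≤ 1`, with `J(0) ≤ 1/2`, then for
`0 ≤ t ≤ C_N / J(0)^{2N}` with `C_N = (2^{2N} - 1)/(2^{2N+1} N C)`, one has
`J(t) ≤ 2 J(0)` and `|J(t) - J(0)| ≤ 2^{2N+1} C J(0)^{2N+1} t`. -/
theorem first_integral_estimate (N : ℕ) (hN : 1 ≤ N) (C : ℝ) (hC : 0 < C)
    (J J' : ℝ → ℝ)
    (hpos : ∀ t : ℝ, 0 ≤ t → 0 < J t)
    (hderiv : ∀ t : ℝ, 0 ≤ t → HasDerivAt J (J' t) t)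
    (hineq : ∀ t : ℝ, 0 ≤ t → J t ≤ 1 → |J' t| ≤ C * J t ^ (2 * N + 1))
    (h0 : J 0 ≤ 1 / 2) (t : ℝ) (ht0 : 0 ≤ t)
    (ht : t ≤ ((2 ^ (2 * N) - 1) / (2 ^ (2 * N + 1) * N * C)) / J 0 ^ (2 * N)) :
    J t ≤ 2 * J 0 ∧ |J t - J 0| ≤ 2 ^ (2 * N + 1) * C * J 0 ^ (2 * N + 1) * t := by
  have ha : 0 < J 0 := hpos 0 le_rfl
  set a : ℝ := J 0 with ha_def
  have ha1 : 2 * a ≤ 1 := by linarith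
  have hNpos : (0:ℝ) < N := by exact_mod_cast hN
  set K : ℝ := 2 ^ (2 * N) with hK_def
  have hK1 : (1:ℝ) < K := one_lt_pow₀ (by norm_num) (by omega)
  have hK0 : (0:ℝ) < K := by linarith
  have hK2 : (2:ℝ) ^ (2 * N + 1) = 2 * K := by rw [hK_def, pow_succ]; ring
  have hapow : 0 < a ^ (2 * N) := pow_pos ha _
  -- bound on t
  have ht' : 2 * N * C * t ≤ (K - 1) / (K * a ^ (2 * N)) := by
    have h1 : 2 * N * C * t ≤ 2 * N * C * (((K - 1) / (2 * K * N * C)) / a ^ (2 * N)) := by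
      apply mul_le_mul_of_nonneg_left _ (by positivity)
      rw [hK2] at ht; exact ht
    refine h1.trans_eq ?_
    field_simp
  -- key estimate: if J ≤ 2a on [0,s], then (J s ^ 2N)⁻¹ ≥ (a ^ 2N)⁻¹ - 2NCs
  have key : ∀ s, s ∈ Icc 0 t → (∀ u ∈ Icc (0:ℝ) s, J u ≤ 2 * a) →
      (a ^ (2 * N))⁻¹ - 2 * N * C * s ≤ (J s ^ (2 * N))⁻¹ := by
    intro s hs hyp
    set g : ℝ → ℝ := fun u => (J u ^ (2 * N))⁻¹ with hg_def
    set g' : ℝ → ℝ := fun u =>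
      -((2 * N : ℕ) * J u ^ (2 * N - 1) * J' u) / (J u ^ (2 * N)) ^ 2 with hg'_def
    have hgderiv : ∀ u ∈ Icc (0:ℝ) s, HasDerivWithinAt g (g' u) (Icc 0 s) u := by
      intro u hu
      exact (((hderiv u hu.1).pow (2 * N)).inv (pow_pos (hpos u hu.1) _).ne').hasDerivWithinAt
    have hbound : ∀ u ∈ Icc (0:ℝ) s, ‖g' u‖ ≤ 2 * N * C := by
      intro u hu
      have hJu : 0 < J u := hpos u hu.1
      have hJu1 : J u ≤ 1 := (hyp u hu).trans ha1
      have hJ' : |J' u| ≤ C * J u ^ (2 * N + 1) := hineq u hu.1 hJu1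
      have habs : ‖g' u‖ = (2 * N * J u ^ (2 * N - 1) * |J' u|) / (J u ^ (2 * N)) ^ 2 := by
        rw [hg'_def]
        rw [Real.norm_eq_abs, abs_div, abs_neg, abs_mul, abs_mul, abs_of_pos (pow_pos hJu _),
          abs_of_pos (pow_pos (pow_pos hJu _) 2)]
        norm_num
      rw [habs, div_le_iff₀ (by positivity)]
      have hpoweq : J u ^ (2 * N - 1) * (C * J u ^ (2 * N + 1)) = C * (J u ^ (2 * N)) ^ 2 := by
        rw [← pow_mul, ← mul_assoc, mul_comm (J u ^ (2 * N - 1)) C, mul_assoc, ← pow_add]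
        congr 2
        omega
      calc 2 * ↑N * J u ^ (2 * N - 1) * |J' u|
          ≤ 2 * ↑N * (J u ^ (2 * N - 1) * (C * J u ^ (2 * N + 1))) := by
            rw [mul_assoc]
            exact mul_le_mul_of_nonneg_left
              (mul_le_mul_of_nonneg_left hJ' (by positivity)) (by positivity)
        _ = 2 * ↑N * C * (J u ^ (2 * N)) ^ 2 := by rw [hpoweq]; ring
    have h0s : (0:ℝ) ∈ Icc (0:ℝ) s := ⟨le_rfl, hs.1⟩
    have hss : s ∈ Icc (0:ℝ) s := ⟨hs.1, le_rfl⟩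
    have := Convex.norm_image_sub_le_of_norm_hasDerivWithin_le hgderiv hbound
      (convex_Icc 0 s) h0s hss
    rw [Real.norm_eq_abs, Real.norm_eq_abs, sub_zero, abs_of_nonneg hs.1] at this
    have h2 := (abs_le.mp this).1
    simp only [hg_def] at h2
    linarith
  -- the conclusion of key gives J s < 2a strictly when s < t
  have step : ∀ s, s ∈ Icc 0 t → (∀ u ∈ Icc (0:ℝ) s, J u ≤ 2 * a) → s < t → J s < 2 * a := by
    intro s hs hyp hst
    have hk := key s hs hyp
    have hJs : 0 < J s := hpos s hs.1
    have h2a : ((2 * a) ^ (2 * N))⁻¹ = (K * a ^ (2 * N))⁻¹ := by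
      rw [mul_pow, hK_def]
    have hlt : ((2 * a) ^ (2 * N))⁻¹ < (J s ^ (2 * N))⁻¹ := by
      rw [h2a]
      have h1 : 2 * N * C * s < 2 * N * C * t :=
        mul_lt_mul_of_pos_left hst (by positivity)
      have h2 : (K * a ^ (2 * N))⁻¹ = (a ^ (2 * N))⁻¹ - (K - 1) / (K * a ^ (2 * N)) := by
        field_simp
        ring
      rw [h2]
      linarith
    have := (inv_strictAnti₀ (by positivity) hlt)
    rw [inv_inv, inv_inv] at this
    exact (pow_lt_pow_iff_left₀ hJs.le (by positivity) (by omega)).mp this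
  -- bootstrap
  set S : Set ℝ := {s | s ∈ Icc 0 t ∧ ∀ u ∈ Icc (0:ℝ) s, J u ≤ 2 * a} with hS_def
  have h0S : (0:ℝ) ∈ S := by
    refine ⟨⟨le_rfl, ht0⟩, fun u hu => ?_⟩
    have : u = 0 := le_antisymm hu.2 hu.1
    rw [this]; linarith
  have hbdd : BddAbove S := ⟨t, fun s hs => hs.1.2⟩
  set m : ℝ := sSup S with hm_def
  have hm0 : 0 ≤ m := le_csSup hbdd h0S
  have hmt : m ≤ t := csSup_le ⟨0, h0S⟩ fun s hs => hs.1.2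
  have hmem : ∀ u, 0 ≤ u → u < m → J u ≤ 2 * a := by
    intro u hu hum
    obtain ⟨s, hsS, hus⟩ := exists_lt_of_lt_csSup ⟨0, h0S⟩ hum
    exact hsS.2 u ⟨hu, hus.le⟩
  have hcont : ∀ u : ℝ, 0 ≤ u → ContinuousAt J u := fun u hu => (hderiv u hu).continuousAt
  have hJm : J m ≤ 2 * a := by
    rcases eq_or_lt_of_le hm0 with h | h
    · rw [← h]; linarith
    · have htend : Tendsto J (𝓝[<] m) (𝓝 (J m)) :=
        ((hcont m hm0).tendsto).mono_left nhdsWithin_le_nhds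
      refine le_of_tendsto htend ?_
      filter_upwards [Ioo_mem_nhdsLT h] with u hu
      exact hmem u hu.1.le hu.2
  have hmS : m ∈ S := by
    refine ⟨⟨hm0, hmt⟩, fun u hu => ?_⟩
    rcases lt_or_eq_of_le hu.2 with h | h
    · exact hmem u hu.1 h
    · rw [h]; exact hJm
  have hmeqt : m = t := by
    by_contra h
    have hlt : m < t := lt_of_le_of_ne hmt h
    have hstrict : J m < 2 * a := step m ⟨hm0, hmt⟩ hmS.2 hlt
    have hev : ∀ᶠ u in 𝓝 m, J u < 2 * a :=
      Filter.Tendsto.eventually_lt_const hstrict (hcont m hm0).tendsto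
    obtain ⟨δ, hδ, hδ'⟩ := Metric.eventually_nhds_iff.mp hev
    set s' : ℝ := min (m + δ / 2) t with hs'_def
    have hms' : m < s' := lt_min (by linarith) hlt
    have hs'S : s' ∈ S := by
      refine ⟨⟨hm0.trans hms'.le, min_le_right _ _⟩, fun u hu => ?_⟩
      rcases le_or_gt u m with h' | h'
      · exact hmS.2 u ⟨hu.1, h'⟩
      · refine (hδ' ?_).le
        have hus' : u ≤ m + δ / 2 := hu.2.trans (min_le_left _ _)
        rw [Real.dist_eq, abs_of_pos (by linarith)]
        linarith
    exact absurd (le_csSup hbdd hs'S) (not_le.mpr hms')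
  have hJt : J t ≤ 2 * a := by rw [← hmeqt]; exact hJm
  refine ⟨hJt, ?_⟩
  -- second part: mean value on [0, t] with |J'| ≤ C (2a)^{2N+1}
  have hallJ : ∀ u ∈ Icc (0:ℝ) t, J u ≤ 2 * a := by rw [← hmeqt]; exact hmS.2
  have hJd : ∀ u ∈ Icc (0:ℝ) t, HasDerivWithinAt J (J' u) (Icc 0 t) u :=
    fun u hu => (hderiv u hu.1).hasDerivWithinAt
  have hJb : ∀ u ∈ Icc (0:ℝ) t, ‖J' u‖ ≤ C * (2 * a) ^ (2 * N + 1) := by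
    intro u hu
    have hJu : 0 < J u := hpos u hu.1
    have hJu2a : J u ≤ 2 * a := hallJ u hu
    have h1 : |J' u| ≤ C * J u ^ (2 * N + 1) := hineq u hu.1 (hJu2a.trans ha1)
    refine h1.trans ?_
    exact mul_le_mul_of_nonneg_left (pow_le_pow_left₀ hJu.le hJu2a _) hC.le
  have hmv := Convex.norm_image_sub_le_of_norm_hasDerivWithin_le hJd hJb
    (convex_Icc 0 t) (⟨le_rfl, ht0⟩ : (0:ℝ) ∈ Icc 0 t) (⟨ht0, le_rfl⟩ : t ∈ Icc 0 t)
  rw [Real.norm_eq_abs, Real.norm_eq_abs, sub_zero, abs_of_nonneg ht0] at hmv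
  refine hmv.trans_eq ?_
  rw [mul_pow, hK2, hK_def]
  ring
end
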